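/- The reduced energy E_* : Ψ → ℝ defined by E_*(φ) := E(ū(φ), φ) = min_{v ∈ g+V} E(v, φ) is everywhere Gâteaux differentiable, and its derivative is given by (∂E_*)(φ)[ψ] = ⟪αφ − C(e ū(φ) − φ), ψ⟫_Ψ for all φ, ψ ∈ Ψ. -/

import Mathlib

open scoped RealInnerProductSpace

/-- The reduced energy `E_*(φ) = E(ū(φ), φ)` is everywhere Gâteaux differentiable with
`(∂E_*)(φ)[ψ] = ⟪αφ − C(e ū(φ) − φ), ψ⟫` for all `φ, ψ ∈ Ψ`. -/
theorem stmt_3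
    {X Ψ : Type*}
    [NormedAddCommGroup X] [InnerProductSpace ℝ X] [CompleteSpace X]
    [NormedAddCommGroup Ψ] [InnerProductSpace ℝ Ψ] [CompleteSpace Ψ]
    (V : Submodule ℝ X) (hV : IsClosed (V : Set X))
    (e : X →L[ℝ] Ψ) (C : Ψ →L[ℝ] Ψ)
    (hCsym : ∀ φ ψ : Ψ, ⟪C φ, ψ⟫ = ⟪φ, C ψ⟫)
    (cstar : ℝ) (hcstar : 0 < cstar)
    (hCcoer : ∀ ψ : Ψ, cstar * ‖ψ‖ ^ 2 ≤ ⟪C ψ, ψ⟫)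
    (c₀ : ℝ) (hc₀ : 0 < c₀)
    (hacoer : ∀ v ∈ V, c₀ * ‖v‖ ^ 2 ≤ ⟪C (e v), e v⟫)
    (ℓ : X →L[ℝ] ℝ) (g : X) (α : ℝ) (hα : 0 ≤ α)
    (E : X → Ψ → ℝ)
    (hE : ∀ u φ, E u φ =
      (1 / 2) * ⟪C (e u - φ), e u - φ⟫ + (α / 2) * ‖φ‖ ^ 2 - ℓ u)
    (ubar : Ψ → X)
    (hubar_mem : ∀ φ : Ψ, ubar φ - g ∈ V)
    (hubar_weak : ∀ φ : Ψ, ∀ v ∈ V, ⟪C (e (ubar φ) - φ), e v⟫ = ℓ v)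
    (hubar_min : ∀ φ : Ψ, ∀ v : X, v - g ∈ V → E (ubar φ) φ ≤ E v φ)
    (Estar : Ψ → ℝ)
    (hEstar : ∀ φ : Ψ, Estar φ = E (ubar φ) φ) :
    ∀ φ ψ : Ψ,
      HasDerivAt (fun ε : ℝ => Estar (φ + ε • ψ))
        ⟪α • φ - C (e (ubar φ) - φ), ψ⟫ 0 := by

  intro φ ψ
  have hsymm : ∀ a b : Ψ, ⟪C a, b⟫ = ⟪C b, a⟫ := by
    intro a b; rw [hCsym, real_inner_comm]
  obtain ⟨w, hw_mem, hw_weak⟩ :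
      ∃ w ∈ V, ∀ v ∈ V, ⟪C (e w), e v⟫ = ⟪C ψ, e v⟫ := by
    refine ⟨ubar (φ + ψ) - ubar φ, ?_, ?_⟩
    · have h1 := hubar_mem (φ + ψ)
      have h2 := hubar_mem φ
      have h : ubar (φ + ψ) - ubar φ = (ubar (φ + ψ) - g) - (ubar φ - g) := by abel
      rw [h]; exact V.sub_mem h1 h2
    · intro v hv
      have h1 := hubar_weak (φ + ψ) v hv
      have h2 := hubar_weak φ v hv
      simp only [map_sub, map_add, inner_sub_left, inner_add_left] at h1 h2 ⊢
      linarith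
  have haff : ∀ ε : ℝ, ubar (φ + ε • ψ) = ubar φ + ε • w := by
    intro ε
    set d : X := ubar (φ + ε • ψ) - ubar φ - ε • w with hd_def
    have hd_mem : d ∈ V := by
      have h1 := hubar_mem (φ + ε • ψ)
      have h2 := hubar_mem φ
      have h : d = (ubar (φ + ε • ψ) - g) - (ubar φ - g) - ε • w := by
        rw [hd_def]; abel
      rw [h]; exact V.sub_mem (V.sub_mem h1 h2) (V.smul_mem ε hw_mem)
    have hd_orth : ∀ v ∈ V, ⟪C (e d), e v⟫ = 0 := by
      intro v hv
      have h1 := hubar_weak (φ + ε • ψ) v hv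
      have h2 := hubar_weak φ v hv
      have h3 := hw_weak v hv
      simp only [hd_def, map_sub, map_add, map_smul, inner_sub_left,
        inner_add_left, real_inner_smul_left] at h1 h2 h3 ⊢
      linear_combination h1 - h2 - ε * h3
    have hz : ⟪C (e d), e d⟫ = 0 := hd_orth d hd_mem
    have hle := hacoer d hd_mem
    have hd0 : d = 0 := by
      have : ‖d‖ ^ 2 ≤ 0 := by nlinarith
      have : ‖d‖ = 0 := by nlinarith [sq_nonneg ‖d‖, norm_nonneg d]
      exact norm_eq_zero.mp this
    have : ubar (φ + ε • ψ) - ubar φ - ε • w = 0 := by rw [← hd_def]; exact hd0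
    have := sub_eq_zero.mp (by rw [sub_sub] at this; exact this)
    exact this
  have hB := hubar_weak φ w hw_mem
  set T : ℝ := ⟪α • φ - C (e (ubar φ) - φ), ψ⟫ with hT
  set Q : ℝ := (1 / 2) * ⟪C (e w - ψ), e w - ψ⟫ + (α / 2) * ‖ψ‖ ^ 2 with hQ
  have hexpand : ∀ (t : ℝ) (r s : Ψ),
      ⟪C (r + t • s), r + t • s⟫
        = ⟪C r, r⟫ + 2 * t * ⟪C r, s⟫ + t ^ 2 * ⟪C s, s⟫ := by
    intro t r s
    simp only [map_add, map_smul, inner_add_left, inner_add_right,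
      real_inner_smul_left, real_inner_smul_right]
    linear_combination t * hsymm s r
  have hnorm : ∀ t : ℝ, ‖φ + t • ψ‖ ^ 2
      = ‖φ‖ ^ 2 + 2 * t * ⟪φ, ψ⟫ + t ^ 2 * ‖ψ‖ ^ 2 := by
    intro t
    rw [norm_add_sq_real, real_inner_smul_right, norm_smul]
    simp only [mul_pow, sq_abs, Real.norm_eq_abs]
    ring
  have key : ∀ ε : ℝ, Estar (φ + ε • ψ) = Estar φ + ε * T + ε ^ 2 * Q := by
    intro ε
    rw [hEstar, hEstar, hE, hE, haff ε]
    have harg : e (ubar φ + ε • w) - (φ + ε • ψ)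
        = (e (ubar φ) - φ) + ε • (e w - ψ) := by
      simp only [map_add, map_smul]
      module
    rw [harg, hexpand ε, hnorm ε, map_add, map_smul, smul_eq_mul, hT, hQ]
    simp only [inner_sub_left, inner_sub_right, real_inner_smul_left]
    linear_combination ε * hB
  have hfun : (fun ε : ℝ => Estar (φ + ε • ψ))
      = fun ε : ℝ => Estar φ + ε * T + ε ^ 2 * Q := funext key
  have h1 : HasDerivAt (fun ε : ℝ => Estar φ + ε * T + ε ^ 2 * Q)
      (0 + 1 * T + (2 * (0:ℝ) ^ 1) * Q) 0 :=
    (((hasDerivAt_const (0:ℝ) (Estar φ)).add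
      ((hasDerivAt_id (0:ℝ)).mul_const T)).add
      ((hasDerivAt_pow 2 (0:ℝ)).mul_const Q))
  rw [show (0:ℝ) + 1 * T + (2 * (0:ℝ) ^ 1) * Q = T by ring] at h1
  rw [hfun]
  exact h1
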